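/- Every BCR diagram has an even number of vertices; equivalently, the degree of a BCR diagram (half the number of its vertices) is an integer. -/
import Mathlib


open Finset

/-- A finite directed graph with a distinguished set of internal vertices `Vi`
and a distinguished set of internal edges `Ei`. Edges are ordered pairs of
vertices, so there are no multiple edges with the same orientation. -/
structure DiGraph (V : Type*) [DecidableEq V] [Fintype V] where
  E : Finset (V × V)
  Vi : Finset V
  Ei : Finset (V × V)

namespace DiGraph

variable {V : Type*} [DecidableEq V] [Fintype V] (G : DiGraph V)

/-- The external edges. -/
def Ee : Finset (V × V) := G.E \ G.Ei

/-- The external vertices. -/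
def Ve : Finset V := G.Viᶜ

/-- The edges going out of `v`. -/
def outE (v : V) : Finset (V × V) := G.E.filter fun e => e.1 = v

/-- The edges coming into `v`. -/
def inE (v : V) : Finset (V × V) := G.E.filter fun e => e.2 = v

/-- The valence of a vertex. -/
def valence (v : V) : ℕ := (G.outE v).card + (G.inE v).card

def Univalent (v : V) : Prop := G.valence v = 1

def Bivalent (v : V) : Prop := G.valence v = 2

def Trivalent (v : V) : Prop := G.valence v = 3

/-- A leg is an external edge whose source is a univalent vertex. -/
def IsLeg (e : V × V) : Prop := e ∈ G.Ee ∧ G.Univalent e.1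

/-- `v` is external and trivalent, with two incoming external edges and one
outgoing external edge, and one of the incoming edges comes from a univalent
vertex. -/
def Cond1 (v : V) : Prop :=
  v ∉ G.Vi ∧
  (∃ e, G.outE v = {e} ∧ e ∈ G.Ee) ∧
  (∃ e f, e ≠ f ∧ G.inE v = {e, f} ∧ e ∈ G.Ee ∧ f ∈ G.Ee) ∧
  (∃ e ∈ G.inE v, G.Univalent e.1)

/-- `v` is internal and trivalent, with one incoming internal edge, one
outgoing internal edge, and one incoming external edge coming from a
univalent vertex. -/
def Cond2 (v : V) : Prop :=
  v ∈ G.Vi ∧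
  (∃ e, G.outE v = {e} ∧ e ∈ G.Ei) ∧
  (∃ e f, e ≠ f ∧ G.inE v = {e, f} ∧ e ∈ G.Ei ∧ f ∈ G.Ee ∧ G.Univalent f.1)

/-- `v` is internal and univalent, with one outgoing external edge. -/
def Cond3 (v : V) : Prop :=
  v ∈ G.Vi ∧ (∃ e, G.outE v = {e} ∧ e ∈ G.Ee) ∧ G.inE v = ∅

/-- `v` is internal and bivalent, with one incoming external edge and one
outgoing internal edge. -/
def Cond4 (v : V) : Prop :=
  v ∈ G.Vi ∧ (∃ e, G.outE v = {e} ∧ e ∈ G.Ei) ∧ (∃ f, G.inE v = {f} ∧ f ∈ G.Ee)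

/-- `v` is internal and bivalent, with one incoming internal edge and one
outgoing external edge. -/
def Cond5 (v : V) : Prop :=
  v ∈ G.Vi ∧ (∃ e, G.outE v = {e} ∧ e ∈ G.Ee) ∧ (∃ f, G.inE v = {f} ∧ f ∈ G.Ei)

/-- The (undirected) adjacency relation of the underlying graph. -/
def Adj (a b : V) : Prop := (a, b) ∈ G.E ∨ (b, a) ∈ G.E

/-- `G` is a BCR diagram: edges join distinct vertices, internal edges are
edges, the underlying graph is connected, and every vertex satisfies one of
the five conditions. -/
def IsBCR : Prop :=
  (∀ e ∈ G.E, e.1 ≠ e.2) ∧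
  G.Ei ⊆ G.E ∧
  (∀ v w : V, Relation.ReflTransGen G.Adj v w) ∧
  (∀ v : V, G.Cond1 v ∨ G.Cond2 v ∨ G.Cond3 v ∨ G.Cond4 v ∨ G.Cond5 v)

end DiGraph

/-- Every BCR diagram has an even number of vertices. -/
theorem bcr_even_vertices {V : Type*} [DecidableEq V] [Fintype V]
    (G : DiGraph V) (hG : G.IsBCR) :
    Even (Fintype.card V) := by
  classical
  obtain ⟨hne, hsub, hconn, hcond⟩ := hG
  -- helper: internal edges out of / into v, described via outE / inE
  have hfo : ∀ v, G.Ei.filter (fun e => e.1 = v) =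
      (G.outE v).filter (fun e => e ∈ G.Ei) := by
    intro v
    ext e
    simp only [Finset.mem_filter, DiGraph.outE]
    constructor
    · rintro ⟨h1, h2⟩; exact ⟨⟨hsub h1, h2⟩, h1⟩
    · rintro ⟨⟨_, h2⟩, h1⟩; exact ⟨h1, h2⟩
  have hfi : ∀ v, G.Ei.filter (fun e => e.2 = v) =
      (G.inE v).filter (fun e => e ∈ G.Ei) := by
    intro v
    ext e
    simp only [Finset.mem_filter, DiGraph.inE]
    constructor
    · rintro ⟨h1, h2⟩; exact ⟨⟨hsub h1, h2⟩, h1⟩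
    · rintro ⟨⟨_, h2⟩, h1⟩; exact ⟨h1, h2⟩
  have hEe : ∀ e ∈ G.Ee, e ∉ G.Ei := fun e he => (Finset.mem_sdiff.mp he).2
  -- every vertex has exactly one outgoing edge
  have hout : ∀ v, (G.outE v).card = 1 := by
    intro v
    rcases hcond v with h | h | h | h | h
    · obtain ⟨e, he, _⟩ := h.2.1; rw [he, Finset.card_singleton]
    · obtain ⟨e, he, _⟩ := h.2.1; rw [he, Finset.card_singleton]
    · obtain ⟨e, he, _⟩ := h.2.1; rw [he, Finset.card_singleton]
    · obtain ⟨e, he, _⟩ := h.2.1; rw [he, Finset.card_singleton]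
    · obtain ⟨e, he, _⟩ := h.2.1; rw [he, Finset.card_singleton]
  -- per-vertex parity
  have heven : ∀ v, Even ((G.inE v).card +
      ((G.Ei.filter (fun e => e.1 = v)).card +
       (G.Ei.filter (fun e => e.2 = v)).card)) := by
    intro v
    rw [hfo, hfi]
    rcases hcond v with h | h | h | h | h
    · obtain ⟨_, ⟨e, hoe, heE⟩, ⟨a, b, hab, hin, haE, hbE⟩, _⟩ := h
      rw [hoe, hin]
      rw [Finset.card_pair hab]
      have ha := hEe a haE
      have hb := hEe b hbE
      have he := hEe e heE
      simp [Finset.filter_insert, Finset.filter_singleton, ha, hb, he]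
    · obtain ⟨_, ⟨e, hoe, heI⟩, ⟨a, b, hab, hin, haI, hbE, _⟩⟩ := h
      rw [hoe, hin]
      rw [Finset.card_pair hab]
      have hb := hEe b hbE
      simp [Finset.filter_insert, Finset.filter_singleton, haI, hb, heI]
      decide
    · obtain ⟨_, ⟨e, hoe, heE⟩, hin⟩ := h
      rw [hoe, hin]
      have he := hEe e heE
      simp [Finset.filter_singleton, he]
    · obtain ⟨_, ⟨e, hoe, heI⟩, ⟨f, hin, hfE⟩⟩ := h
      rw [hoe, hin]
      have hf := hEe f hfE
      simp [Finset.filter_singleton, heI, hf]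
    · obtain ⟨_, ⟨e, hoe, heE⟩, ⟨f, hin, hfI⟩⟩ := h
      rw [hoe, hin]
      have he := hEe e heE
      simp [Finset.filter_singleton, he, hfI]
  -- fiberwise counts
  have hE : G.E.card = Fintype.card V := by
    rw [Finset.card_eq_sum_card_fiberwise
      (f := Prod.fst) (t := Finset.univ) (fun x _ => Finset.mem_univ _)]
    have : ∀ v ∈ (Finset.univ : Finset V),
        (G.E.filter (fun e => e.1 = v)).card = 1 := fun v _ => hout v
    rw [Finset.sum_congr rfl this]
    simp
  have hA : ∑ v : V, (G.inE v).card = G.E.card := by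
    rw [Finset.card_eq_sum_card_fiberwise
      (f := Prod.snd) (t := Finset.univ) (fun x _ => Finset.mem_univ _)]
    rfl
  have hB : ∑ v : V, (G.Ei.filter (fun e => e.1 = v)).card = G.Ei.card := by
    rw [Finset.card_eq_sum_card_fiberwise
      (f := Prod.fst) (t := Finset.univ) (fun x _ => Finset.mem_univ _)]
  have hC : ∑ v : V, (G.Ei.filter (fun e => e.2 = v)).card = G.Ei.card := by
    rw [Finset.card_eq_sum_card_fiberwise
      (f := Prod.snd) (t := Finset.univ) (fun x _ => Finset.mem_univ _)]
  have htot : Even (∑ v : V, ((G.inE v).card +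
      ((G.Ei.filter (fun e => e.1 = v)).card +
       (G.Ei.filter (fun e => e.2 = v)).card))) := by
    apply Finset.even_sum
    intro v _
    exact heven v
  rw [Finset.sum_add_distrib, Finset.sum_add_distrib, hA, hB, hC, hE] at htot
  rw [Nat.even_iff] at htot ⊢
  omega
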